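/- For every integer n ≥ 0 and every ω ∈ ℂ, ∫_{−∞}^{∞} H_n(y) e^{iωy} e^{−y²} dy = √π · (iω)ⁿ · e^{−ω²/4}. -/

import Mathlib

open MeasureTheory Set Filter Finset Complex Topology

noncomputable section

/-- The physicists' Hermite polynomials: H₀ = 1, Hₙ₊₁ = 2x·Hₙ − Hₙ'. -/
def hermitePhys : ℕ → Polynomial ℝ
  | 0 => 1
  | n + 1 => 2 * Polynomial.X * hermitePhys n - Polynomial.derivative (hermitePhys n)

private lemma integrable_abs_pow_gauss (k : ℕ) :
    Integrable (fun t : ℝ ↦ |t| ^ k * Real.exp (-(1/2) * t ^ 2)) := by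
  have h := integrable_rpow_mul_exp_neg_mul_sq (b := 1/2) (by norm_num)
    (s := (k : ℝ)) (lt_of_lt_of_le neg_one_lt_zero (Nat.cast_nonneg k))
  refine h.abs.congr (Eventually.of_forall fun t ↦ ?_)
  simp [abs_mul, Real.rpow_natCast, abs_pow, Real.abs_exp]

private lemma integrable_pow_cexp (k : ℕ) (w : ℂ) :
    Integrable (fun t : ℝ ↦ (t : ℂ) ^ k * Complex.exp (Complex.I * w * t) *
      (Real.exp (-t ^ 2) : ℂ)) := by
  refine Integrable.mono' (((integrable_abs_pow_gauss k).const_mul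
    (Real.exp (w.im ^ 2 / 2)))) ?_ (Eventually.of_forall fun t ↦ ?_)
  · apply Continuous.aestronglyMeasurable
    fun_prop
  · have hre : (Complex.I * w * (t : ℂ)).re = -(w.im * t) := by
      simp [Complex.mul_re, Complex.mul_im]
    have hnorm : ‖(t : ℂ) ^ k * Complex.exp (Complex.I * w * t) * (Real.exp (-t ^ 2) : ℂ)‖
        = |t| ^ k * (Real.exp (-(w.im * t)) * Real.exp (-t ^ 2)) := by
      rw [norm_mul, norm_mul, norm_pow, Complex.norm_real,
        Complex.norm_exp, hre, Complex.norm_real]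
      simp [Real.norm_eq_abs, Real.abs_exp, mul_assoc]
    rw [hnorm]
    have hexp : Real.exp (-(w.im * t)) * Real.exp (-t ^ 2)
        ≤ Real.exp (w.im ^ 2 / 2) * Real.exp (-(1/2) * t ^ 2) := by
      rw [← Real.exp_add, ← Real.exp_add]
      apply Real.exp_le_exp.2
      nlinarith [sq_nonneg (w.im + t)]
    have hp : (0 : ℝ) ≤ |t| ^ k := by positivity
    calc |t| ^ k * (Real.exp (-(w.im * t)) * Real.exp (-t ^ 2))
        ≤ |t| ^ k * (Real.exp (w.im ^ 2 / 2) * Real.exp (-(1/2) * t ^ 2)) :=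
          mul_le_mul_of_nonneg_left hexp hp
      _ = Real.exp (w.im ^ 2 / 2) * (|t| ^ k * Real.exp (-(1/2) * t ^ 2)) := by ring

private lemma integrable_poly_cexp (P : Polynomial ℝ) (w : ℂ) :
    Integrable (fun t : ℝ ↦ ((P.eval t : ℝ) : ℂ) * Complex.exp (Complex.I * w * t) *
      (Real.exp (-t ^ 2) : ℂ)) := by
  induction P using Polynomial.induction_on' with
  | add p q hp hq =>
      refine (hp.add hq).congr (Eventually.of_forall fun t ↦ ?_)
      simp only [Pi.add_apply]
      push_cast [Polynomial.eval_add]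
      ring
  | monomial n a =>
      refine ((integrable_pow_cexp n w).const_mul (a : ℂ)).congr
        (Eventually.of_forall fun t ↦ ?_)
      simp only [Polynomial.eval_monomial]
      push_cast
      ring

private lemma cexp_split (w : ℂ) (t : ℝ) :
    Complex.exp (Complex.I * w * t - (t : ℂ) ^ 2)
      = Complex.exp (Complex.I * w * t) * (Real.exp (-t ^ 2) : ℂ) := by
  rw [Complex.ofReal_exp, ← Complex.exp_add]
  push_cast
  ring_nf

/-- the Fourier transform of Hₙ(y)e^{−y²}. -/
theorem hermite_gaussian_fourier (n : ℕ) (w : ℂ) :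
    ∫ t : ℝ, (((hermitePhys n).eval t : ℝ) : ℂ) * Complex.exp (Complex.I * w * t) *
        Real.exp (-t ^ 2)
      = (Real.sqrt Real.pi : ℂ) * (Complex.I * w) ^ n * Complex.exp (-w ^ 2 / 4) := by
  induction n with
  | zero =>
      have h := fourierIntegral_gaussian (b := 1) (by norm_num) w
      have hL : (∫ t : ℝ, (((hermitePhys 0).eval t : ℝ) : ℂ) *
            Complex.exp (Complex.I * w * t) * (Real.exp (-t ^ 2) : ℂ))
          = ∫ x : ℝ, Complex.exp (Complex.I * w * x) * Complex.exp (-1 * (x : ℂ) ^ 2) := by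
        refine integral_congr_ae (Eventually.of_forall fun t ↦ ?_)
        simp only [hermitePhys, Polynomial.eval_one, Complex.ofReal_one, one_mul]
        rw [Complex.ofReal_exp]
        push_cast
        ring_nf
      rw [hL, h]
      have hsqrt : ((Real.pi : ℂ) / 1) ^ (1/2 : ℂ) = (Real.sqrt Real.pi : ℂ) := by
        rw [div_one, show ((1:ℂ)/2) = ((1/2 : ℝ) : ℂ) by norm_num,
          ← Complex.ofReal_cpow Real.pi_pos.le, Real.rpow_def_of_pos Real.pi_pos,
          Real.sqrt_eq_rpow, Real.rpow_def_of_pos Real.pi_pos]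
      rw [hsqrt]
      ring_nf
  | succ n ih =>
      set P := hermitePhys n with hP
      set E : ℝ → ℂ := fun t ↦ Complex.exp (Complex.I * w * t - (t : ℂ) ^ 2) with hE
      set u : ℝ → ℂ := fun t ↦ ((P.eval t : ℝ) : ℂ) * E t with hu
      set v : ℝ → ℂ := fun t ↦
        Complex.I * w * u t - (((hermitePhys (n+1)).eval t : ℝ) : ℂ) * E t with hv
      -- derivative of u is v
      have hderiv : ∀ t : ℝ, HasDerivAt u (v t) t := by
        intro t
        have h1 : HasDerivAt (fun t : ℝ ↦ ((P.eval t : ℝ) : ℂ))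
            ((P.derivative.eval t : ℝ) : ℂ) t := (P.hasDerivAt t).ofReal_comp
        have hid : HasDerivAt (fun t : ℝ ↦ (t : ℂ)) 1 t :=
          (hasDerivAt_id t).ofReal_comp
        have hsq : HasDerivAt (fun t : ℝ ↦ (t : ℂ) ^ 2) (2 * t) t := by
          have hm : HasDerivAt (fun t : ℝ ↦ (t : ℂ) * t) _ t := hid.mul hid
          simpa [pow_two, two_mul] using hm
        have h2 : HasDerivAt (fun t : ℝ ↦ Complex.I * w * (t : ℂ) - (t : ℂ) ^ 2)
            (Complex.I * w - 2 * t) t := by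
          have ha : HasDerivAt (fun t : ℝ ↦ Complex.I * w * (t : ℂ) - (t : ℂ) ^ 2) _ t :=
            (hid.const_mul (Complex.I * w)).sub hsq
          simpa using ha
        have h3 : HasDerivAt E (E t * (Complex.I * w - 2 * t)) t := h2.cexp
        have h4 := h1.mul h3
        refine HasDerivAt.congr_deriv h4 ?_
        have heval : ((hermitePhys (n+1)).eval t : ℝ)
            = 2 * t * P.eval t - P.derivative.eval t := by
          show ((2 * Polynomial.X * P - Polynomial.derivative P).eval t : ℝ) = _
          simp
        rw [hv]
        simp only [heval]
        push_cast
        ring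
      -- integrability
      have hu_int : Integrable u := by
        refine (integrable_poly_cexp P w).congr (Eventually.of_forall fun t ↦ ?_)
        simp only [hu, hE, cexp_split]
        push_cast
        ring
      have hq_int : Integrable (fun t ↦ (((hermitePhys (n+1)).eval t : ℝ) : ℂ) * E t) := by
        refine (integrable_poly_cexp (hermitePhys (n+1)) w).congr
          (Eventually.of_forall fun t ↦ ?_)
        simp only [hE, cexp_split]
        push_cast
        ring
      have hv_int : Integrable v := ((hu_int.const_mul (Complex.I * w)).sub hq_int)
      have hzero : (∫ t : ℝ, v t) = 0 :=
        integral_eq_zero_of_hasDerivAt_of_integrable hderiv hv_int hu_int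
      have hsplit : (∫ t : ℝ, v t)
          = Complex.I * w * (∫ t : ℝ, u t)
            - ∫ t : ℝ, (((hermitePhys (n+1)).eval t : ℝ) : ℂ) * E t := by
        rw [hv]
        rw [integral_sub (hu_int.const_mul (Complex.I * w)) hq_int,
          integral_const_mul]
      have hIu : (∫ t : ℝ, u t)
          = (Real.sqrt Real.pi : ℂ) * (Complex.I * w) ^ n * Complex.exp (-w ^ 2 / 4) := by
        rw [← ih]
        refine integral_congr_ae (Eventually.of_forall fun t ↦ ?_)
        simp only [hu, hE, cexp_split]
        push_cast
        ring
      have hgoal : (∫ t : ℝ, (((hermitePhys (n+1)).eval t : ℝ) : ℂ) *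
          Complex.exp (Complex.I * w * t) * (Real.exp (-t ^ 2) : ℂ))
          = ∫ t : ℝ, (((hermitePhys (n+1)).eval t : ℝ) : ℂ) * E t := by
        refine integral_congr_ae (Eventually.of_forall fun t ↦ ?_)
        simp only [hE, cexp_split]
        push_cast
        ring
      rw [hgoal]
      have := hsplit
      rw [hzero, hIu] at this
      have h5 : (∫ t : ℝ, (((hermitePhys (n+1)).eval t : ℝ) : ℂ) * E t)
          = Complex.I * w *
            ((Real.sqrt Real.pi : ℂ) * (Complex.I * w) ^ n * Complex.exp (-w ^ 2 / 4)) := by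
        linear_combination this
      rw [h5]
      ring

end
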